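/- Under the hypotheses of the previous lemma, if a ≠ b and |p_a − s_k| ≤ δ, then ⟨ψ_k|Π_b|ψ_k⟩ ≤ 4δ²/(p_a − p_b)². -/

import Mathlib

open Matrix

section Aux
open Finset
open scoped InnerProductSpace

noncomputable def toE {d : ℕ} (v : Fin d → ℂ) : EuclideanSpace ℂ (Fin d) :=
  (WithLp.equiv 2 (Fin d → ℂ)).symm v

lemma toE_inner {d : ℕ} (x y : Fin d → ℂ) : ⟪toE x, toE y⟫_ℂ = star x ⬝ᵥ y := by
  simp [toE, dotProduct, PiLp.inner_apply, mul_comm]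

lemma toE_sub {d : ℕ} (x y : Fin d → ℂ) : toE (x - y) = toE x - toE y := rfl
lemma toE_smul {d : ℕ} (c : ℂ) (x : Fin d → ℂ) : toE (c • x) = c • toE x := rfl
lemma toE_sum {d n : ℕ} (f : Fin n → (Fin d → ℂ)) : toE (∑ i, f i) = ∑ i, toE (f i) :=
  map_sum (WithLp.linearEquiv 2 ℂ (Fin d → ℂ)).symm f Finset.univ

lemma normE_sq {d : ℕ} (x : EuclideanSpace ℂ (Fin d)) : ‖x‖ ^ 2 = (⟪x, x⟫_ℂ).re := by
  rw [← inner_self_eq_norm_sq (𝕜 := ℂ)]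
  simp [RCLike.re_to_complex]

lemma toE_norm_sq {d : ℕ} (x : Fin d → ℂ) : ‖toE x‖ ^ 2 = (star x ⬝ᵥ x).re := by
  rw [normE_sq, toE_inner]

lemma toE_norm_eq {d : ℕ} (x : Fin d → ℂ) : ‖toE x‖ = Real.sqrt (∑ i, ‖x i‖ ^ 2) := by
  rw [EuclideanSpace.norm_eq]; simp [toE]

lemma sum_mulVec' {m d : ℕ} (f : Fin m → Matrix (Fin d) (Fin d) ℂ) (v : Fin d → ℂ) :
    (∑ i, f i) *ᵥ v = ∑ i, f i *ᵥ v := by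
  funext j
  rw [Finset.sum_apply]
  simp only [mulVec, dotProduct, Finset.sum_apply, Matrix.sum_apply, Finset.sum_mul]
  exact Finset.sum_comm

lemma mul_conj_re (z : ℂ) : (z * star z).re = ‖z‖ ^ 2 := by
  rw [show (star z : ℂ) = starRingEnd ℂ z from rfl, Complex.mul_conj]
  rw [Complex.normSq_eq_norm_sq]
  exact Complex.ofReal_re _

lemma mulVec_norm_sq_le {d : ℕ} (M : Matrix (Fin d) (Fin d) ℂ) (v : Fin d → ℂ) :
    ‖toE (M.mulVec v)‖ ^ 2 ≤ (∑ i, ∑ j, ‖M i j‖ ^ 2) * ‖toE v‖ ^ 2 := by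
  have h1 : ‖toE (M.mulVec v)‖ ^ 2 = ∑ i, ‖M.mulVec v i‖ ^ 2 := by
    rw [toE_norm_eq, Real.sq_sqrt (by positivity)]
  rw [h1, Finset.sum_mul]
  refine Finset.sum_le_sum fun i _ => ?_
  have h2 : M.mulVec v i = ⟪toE (star (M i)), toE v⟫_ℂ := by
    rw [toE_inner]; simp [mulVec, dotProduct]
  have h3 : ‖M.mulVec v i‖ ≤ ‖toE (star (M i))‖ * ‖toE v‖ := by
    rw [h2]; exact norm_inner_le_norm _ _
  have h4 : ‖toE (star (M i))‖ ^ 2 = ∑ j, ‖M i j‖ ^ 2 := by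
    rw [toE_norm_eq, Real.sq_sqrt (by positivity)]; simp [Pi.star_apply]
  calc ‖M.mulVec v i‖ ^ 2 ≤ (‖toE (star (M i))‖ * ‖toE v‖) ^ 2 :=
        pow_le_pow_left₀ (norm_nonneg _) h3 2
    _ = (∑ j, ‖M i j‖ ^ 2) * ‖toE v‖ ^ 2 := by rw [mul_pow, h4]

end Aux


open Finset in
open scoped InnerProductSpace in
theorem stmt_12 (d n : ℕ)
    (P : Fin n → Matrix (Fin d) (Fin d) ℂ)
    (hPh : ∀ a, (P a).IsHermitian)
    (hPo : ∀ a b, P a * P b = if a = b then P a else 0)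
    (hP1 : ∑ a, P a = 1)
    (p : Fin n → ℝ) (hpinj : Function.Injective p)
    (ψ : Fin d → (Fin d → ℂ))
    (hψ : ∀ k l, star (ψ k) ⬝ᵥ ψ l = if k = l then 1 else 0)
    (s : Fin d → ℝ)
    (ρ σ : Matrix (Fin d) (Fin d) ℂ)
    (hρ : ρ = ∑ a, (p a : ℂ) • P a)
    (hσ : σ = ∑ k, (s k : ℂ) • vecMulVec (ψ k) (star (ψ k)))
    (δ : ℝ) (hδ0 : 0 ≤ δ)
    (hdist : Real.sqrt (((ρ - σ) * (ρ - σ)).trace.re) ≤ δ)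
    (hn : 2 ≤ n)
    (Δ : ℝ) (hΔ : ∀ a b, a ≠ b → Δ ≤ |p a - p b|)
    (hΔex : ∃ a b, a ≠ b ∧ Δ = |p a - p b|)
    (hδΔ : δ < Δ / (1 + Real.sqrt d)) :
    ∀ a b k, a ≠ b → |p a - s k| ≤ δ →
      (star (ψ k) ⬝ᵥ (P b).mulVec (ψ k)).re ≤ 4 * δ ^ 2 / (p a - p b) ^ 2 := by
  intro a b k hab hk
  set v := ψ k with hvdef
  have hv1 : star v ⬝ᵥ v = 1 := by simpa using hψ k k
  have hvnorm : ‖toE v‖ = 1 := by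
    have h := toE_norm_sq v
    rw [hv1] at h
    simp at h
    rcases h with h | h
    · exact h
    · nlinarith [norm_nonneg (toE v)]
  have hρh : ρᴴ = ρ := by
    rw [hρ, conjTranspose_sum]
    refine Finset.sum_congr rfl fun c _ => ?_
    rw [conjTranspose_smul, (hPh c).eq]
    simp
  have hσh : σᴴ = σ := by
    rw [hσ, conjTranspose_sum]
    refine Finset.sum_congr rfl fun l _ => ?_
    rw [conjTranspose_smul]
    congr 1
    · simp
    · ext i j
      simp [conjTranspose_apply, vecMulVec_apply, mul_comm]
  have hAh : (ρ - σ)ᴴ = ρ - σ := by rw [conjTranspose_sub, hρh, hσh]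
  have hfrob : (∑ i, ∑ j, ‖(ρ - σ) i j‖ ^ 2) ≤ δ ^ 2 := by
    have htr : ((ρ - σ) * (ρ - σ)).trace.re = ∑ i, ∑ j, ‖(ρ - σ) i j‖ ^ 2 := by
      rw [trace, Complex.re_sum]
      refine Finset.sum_congr rfl fun i _ => ?_
      rw [diag_apply, mul_apply, Complex.re_sum]
      refine Finset.sum_congr rfl fun j _ => ?_
      have hconj : (ρ - σ) j i = star ((ρ - σ) i j) := by
        conv_lhs => rw [← hAh]
        simp [conjTranspose_apply]
      rw [hconj]
      exact mul_conj_re _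
    have hnn : 0 ≤ ∑ i, ∑ j, ‖(ρ - σ) i j‖ ^ 2 := by positivity
    rw [htr] at hdist
    calc (∑ i, ∑ j, ‖(ρ - σ) i j‖ ^ 2)
        = Real.sqrt (∑ i, ∑ j, ‖(ρ - σ) i j‖ ^ 2) ^ 2 := (Real.sq_sqrt hnn).symm
      _ ≤ δ ^ 2 := pow_le_pow_left₀ (Real.sqrt_nonneg _) hdist 2
  have hMv : ‖toE ((ρ - σ).mulVec v)‖ ≤ δ := by
    have h := mulVec_norm_sq_le (ρ - σ) v
    rw [hvnorm] at h
    simp only [one_pow, mul_one] at h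
    have h2 : ‖toE ((ρ - σ).mulVec v)‖ ^ 2 ≤ δ ^ 2 := le_trans h hfrob
    nlinarith [norm_nonneg (toE ((ρ - σ).mulVec v))]
  have hσv : σ.mulVec v = (s k : ℂ) • v := by
    rw [hσ, sum_mulVec']
    have hterm : ∀ l, ((s l : ℂ) • vecMulVec (ψ l) (star (ψ l))).mulVec v
        = (s l : ℂ) • (star (ψ l) ⬝ᵥ v) • ψ l := by
      intro l
      rw [Matrix.smul_mulVec]
      congr 1
      funext i
      simp only [mulVec, vecMulVec_apply, dotProduct, Pi.smul_apply, smul_eq_mul,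
        Finset.mul_sum]
      rw [Finset.sum_mul]
      exact Finset.sum_congr rfl fun j _ => by ring
    simp_rw [hterm]
    rw [Finset.sum_eq_single k]
    · rw [hψ k k]; simp; rfl
    · intro l _ hl
      rw [hvdef, hψ l k, if_neg hl]; simp
    · simp
  have hρv : ρ.mulVec v = ∑ c, (p c : ℂ) • (P c).mulVec v := by
    rw [hρ, sum_mulVec']
    exact Finset.sum_congr rfl fun c _ => Matrix.smul_mulVec _ _ _
  have hvd : v = ∑ c, (P c).mulVec v := by
    have h0 : (∑ c, P c) *ᵥ v = v := by rw [hP1, Matrix.one_mulVec]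
    conv_lhs => rw [← h0]
    exact sum_mulVec' _ _
  have hdecomp : ρ.mulVec v - (p a : ℂ) • v = ∑ c, ((p c : ℂ) - (p a : ℂ)) • (P c).mulVec v := by
    symm
    simp_rw [sub_smul]
    rw [Finset.sum_sub_distrib, ← hρv, ← Finset.smul_sum, ← hvd]
  have hdot : ∀ c c', star ((P c).mulVec v) ⬝ᵥ (P c').mulVec v
      = star v ⬝ᵥ (P c * P c').mulVec v := by
    intro c c'
    rw [star_mulVec, (hPh c).eq, ← Matrix.dotProduct_mulVec, Matrix.mulVec_mulVec]
  set w : Fin n → EuclideanSpace ℂ (Fin d) :=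
    fun c => ((p c : ℂ) - (p a : ℂ)) • toE ((P c).mulVec v) with hw
  have hio : ∀ c c', c ≠ c' → ⟪w c, w c'⟫_ℂ = 0 := by
    intro c c' hcc
    rw [hw]
    simp only [inner_smul_left, inner_smul_right, toE_inner]
    rw [hdot, hPo, if_neg hcc]
    simp
  have hterm2 : ∀ c, ‖w c‖ ^ 2 = (p c - p a) ^ 2 * (star v ⬝ᵥ (P c).mulVec v).re := by
    intro c
    rw [hw]
    simp only [norm_smul, mul_pow]
    congr 1
    · rw [← Complex.ofReal_sub, Complex.norm_real]
      exact sq_abs _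
    · rw [toE_norm_sq, hdot, hPo, if_pos rfl]
  have hpyth : ‖∑ c, w c‖ ^ 2 = ∑ c, ‖w c‖ ^ 2 := by
    rw [normE_sq, sum_inner]
    rw [show (∑ c, ⟪w c, ∑ c', w c'⟫_ℂ) = ∑ c, ∑ c', ⟪w c, w c'⟫_ℂ from
      Finset.sum_congr rfl fun c _ => inner_sum _ _ _]
    have hdiag : ∀ c ∈ Finset.univ, (∑ c', ⟪w c, w c'⟫_ℂ) = ⟪w c, w c⟫_ℂ := fun c _ =>
      Finset.sum_eq_single c (fun c' _ h => hio c c' (Ne.symm h)) (by simp)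
    rw [Finset.sum_congr rfl hdiag, Complex.re_sum]
    exact Finset.sum_congr rfl fun c _ => (normE_sq (w c)).symm
  have hsplit : toE (ρ.mulVec v) - (p a : ℂ) • toE v
      = toE ((ρ - σ).mulVec v) + ((s k : ℂ) - (p a : ℂ)) • toE v := by
    have h1 : (ρ - σ).mulVec v = ρ.mulVec v - (s k : ℂ) • v := by
      rw [Matrix.sub_mulVec, hσv]
    rw [h1, toE_sub, toE_smul, sub_smul]
    abel
  have hnb : ‖toE (ρ.mulVec v) - (p a : ℂ) • toE v‖ ≤ 2 * δ := by
    rw [hsplit]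
    calc ‖toE ((ρ - σ).mulVec v) + ((s k : ℂ) - (p a : ℂ)) • toE v‖
        ≤ ‖toE ((ρ - σ).mulVec v)‖ + ‖((s k : ℂ) - (p a : ℂ)) • toE v‖ := norm_add_le _ _
      _ ≤ δ + δ := by
          refine add_le_add hMv ?_
          rw [norm_smul, hvnorm, mul_one, ← Complex.ofReal_sub, Complex.norm_real,
            Real.norm_eq_abs, abs_sub_comm]
          exact hk
      _ = 2 * δ := by ring
  have hsum : toE (ρ.mulVec v) - (p a : ℂ) • toE v = ∑ c, w c := by
    rw [← toE_smul, ← toE_sub, hdecomp, toE_sum]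
    exact Finset.sum_congr rfl fun c _ => toE_smul _ _
  have hchain : (p b - p a) ^ 2 * (star v ⬝ᵥ (P b).mulVec v).re ≤ (2 * δ) ^ 2 := by
    calc (p b - p a) ^ 2 * (star v ⬝ᵥ (P b).mulVec v).re
        = ‖w b‖ ^ 2 := (hterm2 b).symm
      _ ≤ ∑ c, ‖w c‖ ^ 2 :=
          Finset.single_le_sum (f := fun c => ‖w c‖ ^ 2) (fun c _ => by positivity)
            (Finset.mem_univ b)
      _ = ‖∑ c, w c‖ ^ 2 := hpyth.symm
      _ = ‖toE (ρ.mulVec v) - (p a : ℂ) • toE v‖ ^ 2 := by rw [hsum]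
      _ ≤ (2 * δ) ^ 2 := pow_le_pow_left₀ (norm_nonneg _) hnb 2
  have hpab : p a ≠ p b := fun h => hab (hpinj h)
  have hpos : 0 < (p a - p b) ^ 2 := by
    have h0 : p a - p b ≠ 0 := sub_ne_zero.mpr hpab
    positivity
  have heq : (p b - p a) ^ 2 = (p a - p b) ^ 2 := by ring
  rw [heq] at hchain
  rw [le_div_iff₀ hpos]
  calc (star v ⬝ᵥ (P b).mulVec v).re * (p a - p b) ^ 2
      = (p a - p b) ^ 2 * (star v ⬝ᵥ (P b).mulVec v).re := by ring
    _ ≤ (2 * δ) ^ 2 := hchain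
    _ = 4 * δ ^ 2 := by ring
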